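/- Fix d ≥ 1. Let Ω ⊂ ℝ^d be a compact convex set with nonempty interior, and let P be the Borel probability measure with density p, where p is continuous and strictly positive on Ω and vanishes outside Ω. Let Z_1, Z_2, … be i.i.d. with law P, and let y be an interior point of Ω. Then lim_{n→∞} n^{2/d} · E[ min_{1≤j≤n} ‖y − Z_j‖² ] = Γ(1 + 2/d) · ( p(y) · V_d )^{−2/d}. -/

import Mathlib

open MeasureTheory

/-- `V_d = π^{d/2} / Γ(d/2 + 1)`, the volume of the Euclidean unit ball in `ℝ^d`. -/
noncomputable def ballVol (d : ℕ) : ℝ :=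
  Real.pi ^ ((d : ℝ) / 2) / Real.Gamma ((d : ℝ) / 2 + 1)

section AuxLemmas
open Filter Real MeasureTheory Set Metric


lemma aux_pow_tendsto_exp {c : ℕ → ℝ} {x : ℝ}
    (h0 : ∀ n, 0 ≤ c n) (h1 : ∀ n, c n ≤ 1)
    (hx : Tendsto (fun n : ℕ => (n : ℝ) * c n) atTop (nhds x)) :
    Tendsto (fun n : ℕ => (1 - c n) ^ n) atTop (nhds (Real.exp (-x))) := by
  have hc0 : Tendsto c atTop (nhds 0) := by
    have h := hx.mul (tendsto_inv_atTop_zero.comp tendsto_natCast_atTop_atTop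
      (α := ℕ) (β := ℝ))
    rw [mul_zero] at h
    apply h.congr'
    filter_upwards [eventually_gt_atTop 0] with n hn
    have : (n : ℝ) ≠ 0 := Nat.cast_ne_zero.mpr hn.ne'
    simp only [Function.comp_apply]
    field_simp
  have hhalf : ∀ᶠ n in atTop, c n ≤ 1/2 := by
    have := hc0.eventually_le_const (show (0:ℝ) < 1/2 by norm_num)
    exact this
  -- limits of the two bounds
  have hinv : Tendsto (fun n => (1 - c n)⁻¹) atTop (nhds 1) := by
    have : Tendsto (fun n => 1 - c n) atTop (nhds 1) := by
      simpa using (tendsto_const_nhds (x := (1:ℝ))).sub hc0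
    simpa using this.inv₀ (by norm_num)
  have hlow : Tendsto (fun n : ℕ => Real.exp (-(((n:ℝ) * c n) * (1 - c n)⁻¹)))
      atTop (nhds (Real.exp (-x))) := by
    have := (hx.mul hinv).neg
    rw [mul_one] at this
    exact (Real.continuous_exp.tendsto _).comp this
  have hup : Tendsto (fun n : ℕ => Real.exp (-((n:ℝ) * c n)))
      atTop (nhds (Real.exp (-x))) :=
    (Real.continuous_exp.tendsto _).comp hx.neg
  refine tendsto_of_tendsto_of_tendsto_of_le_of_le' hlow hup ?_ ?_
  · filter_upwards [hhalf] with n hn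
    have hlt : c n < 1 := by linarith
    have hpos : (0:ℝ) < 1 - c n := by linarith
    have key : Real.exp (-(c n / (1 - c n))) ≤ 1 - c n := by
      have h2 : c n / (1 - c n) + 1 ≤ Real.exp (c n / (1 - c n)) :=
        Real.add_one_le_exp _
      have h3 : (1 - c n)⁻¹ ≤ Real.exp (c n / (1 - c n)) := by
        have : c n / (1 - c n) + 1 = (1 - c n)⁻¹ := by field_simp; ring
        linarith [this ▸ h2]
      have h4 : (Real.exp (c n / (1 - c n)))⁻¹ ≤ 1 - c n := by
        rw [inv_le_comm₀ (Real.exp_pos _) hpos]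
        exact h3
      rwa [Real.exp_neg]
    calc Real.exp (-(((n:ℝ) * c n) * (1 - c n)⁻¹))
        = Real.exp (-(c n / (1 - c n))) ^ n := by
          rw [← Real.exp_nat_mul]; ring_nf
      _ ≤ (1 - c n) ^ n := pow_le_pow_left₀ (Real.exp_pos _).le key n
  · filter_upwards with n
    calc (1 - c n) ^ n ≤ Real.exp (-(c n)) ^ n := by
          apply pow_le_pow_left₀ (by linarith [h1 n])
          linarith [Real.add_one_le_exp (-(c n))]
      _ = Real.exp (-((n:ℝ) * c n)) := by rw [← Real.exp_nat_mul]; ring_nf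


lemma aux_lintegral_Ioi_scale {H : ℝ → ENNReal} (hH : Measurable H) {a : ℝ} (ha : 0 < a) :
    ∫⁻ s in Set.Ioi (0:ℝ), H (a * s) = ENNReal.ofReal a⁻¹ * ∫⁻ t in Set.Ioi (0:ℝ), H t := by
  have hmap : Measure.map (fun s : ℝ => a * s) (volume.restrict (Set.Ioi (0:ℝ)))
      = (ENNReal.ofReal a⁻¹) • (volume.restrict (Set.Ioi (0:ℝ))) := by
    have hpre : (fun s : ℝ => a * s) ⁻¹' (Set.Ioi 0) = Set.Ioi 0 := by
      ext s; simp [Set.mem_Ioi, mul_pos_iff_of_pos_left ha]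
    rw [← hpre, ← Measure.restrict_map (measurable_const_mul a) measurableSet_Ioi,
      Real.map_volume_mul_left ha.ne', hpre, Measure.restrict_smul, abs_of_pos
      (inv_pos.mpr ha)]
  calc ∫⁻ s in Set.Ioi (0:ℝ), H (a * s)
      = ∫⁻ t, H t ∂(Measure.map (fun s : ℝ => a * s) (volume.restrict (Set.Ioi (0:ℝ)))) := by
        rw [lintegral_map hH (measurable_const_mul a)]
    _ = ENNReal.ofReal a⁻¹ * ∫⁻ t in Set.Ioi (0:ℝ), H t := by
        rw [hmap]; simp [lintegral_smul_measure]


lemma ballVol_pos (d : ℕ) : 0 < ballVol d :=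
  div_pos (Real.rpow_pos_of_pos Real.pi_pos _)
    (Real.Gamma_pos_of_pos (by positivity))

lemma aux_volume_closedBall {d : ℕ} (hd : 1 ≤ d) (y : EuclideanSpace ℝ (Fin d))
    {r : ℝ} (hr : 0 ≤ r) :
    volume (Metric.closedBall y r) = ENNReal.ofReal (r ^ d * ballVol d) := by
  haveI : Nonempty (Fin d) := Fin.pos_iff_nonempty.mp hd
  rw [EuclideanSpace.volume_closedBall, Fintype.card_fin,
    ← ENNReal.ofReal_pow hr, ← ENNReal.ofReal_mul (by positivity)]
  congr 2
  unfold ballVol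
  congr 1
  rw [Real.sqrt_eq_rpow, ← Real.rpow_natCast (Real.pi ^ ((1:ℝ)/2)) d,
    ← Real.rpow_mul Real.pi_pos.le]
  ring_nf

lemma aux_small_ball {d : ℕ} (hd : 1 ≤ d) {p : EuclideanSpace ℝ (Fin d) → ℝ}
    {y : EuclideanSpace ℝ (Fin d)} (hcont : ContinuousAt p y) (hpy : 0 ≤ p y)
    (hq : AEMeasurable (fun x => ENNReal.ofReal (p x))
      (volume : Measure (EuclideanSpace ℝ (Fin d)))) :
    Filter.Tendsto (fun r : ℝ =>
      ((volume.withDensity fun x => ENNReal.ofReal (p x)) (Metric.closedBall y r)).toReal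
        / r ^ d)
      (nhdsWithin 0 (Set.Ioi 0)) (nhds (p y * ballVol d)) := by
  set V := ballVol d with hV
  have hVpos : 0 < V := ballVol_pos d
  rw [Metric.tendsto_nhdsWithin_nhds]
  intro ε hε
  set ε1 : ℝ := ε / (2 * V) with hε1
  have hε1pos : 0 < ε1 := by positivity
  obtain ⟨δ, hδpos, hδ⟩ := Metric.continuousAt_iff.mp hcont ε1 hε1pos
  refine ⟨δ, hδpos, ?_⟩
  intro r hr hrδ
  rw [Set.mem_Ioi] at hr
  rw [Real.dist_eq, sub_zero, abs_of_pos hr] at hrδ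
  have hball : ∀ x ∈ Metric.closedBall y r, |p x - p y| ≤ ε1 := by
    intro x hx
    have h2 := hδ (lt_of_le_of_lt (Metric.mem_closedBall.mp hx) hrδ)
    rw [Real.dist_eq] at h2
    exact h2.le
  have hvol := aux_volume_closedBall hd y hr.le
  set F := (volume.withDensity fun x => ENNReal.ofReal (p x)) (Metric.closedBall y r) with hF
  have happ : F = ∫⁻ x in Metric.closedBall y r, ENNReal.ofReal (p x) ∂volume :=
    withDensity_apply _ measurableSet_closedBall
  have hub : F ≤ ENNReal.ofReal (p y + ε1) * ENNReal.ofReal (r ^ d * V) := by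
    rw [happ, ← hvol, ← setLIntegral_const]
    refine setLIntegral_mono measurable_const (fun x hx => ?_)
    exact ENNReal.ofReal_le_ofReal (by linarith [abs_le.mp (hball x hx) |>.2])
  have hlb : ENNReal.ofReal (p y - ε1) * ENNReal.ofReal (r ^ d * V) ≤ F := by
    rw [happ, ← hvol, ← setLIntegral_const]
    refine setLIntegral_mono_ae hq.restrict (Filter.Eventually.of_forall (fun x hx => ?_))
    exact ENNReal.ofReal_le_ofReal (by linarith [abs_le.mp (hball x hx) |>.1])
  have hFne : F ≠ ⊤ := ne_top_of_le_ne_top (by finiteness) hub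
  have hrd : 0 < r ^ d := by positivity
  have hub' : F.toReal ≤ (p y + ε1) * (r ^ d * V) := by
    calc F.toReal ≤ (ENNReal.ofReal (p y + ε1) * ENNReal.ofReal (r ^ d * V)).toReal :=
          ENNReal.toReal_mono (by finiteness) hub
      _ = (p y + ε1) * (r ^ d * V) := by
          rw [ENNReal.toReal_mul, ENNReal.toReal_ofReal (by positivity),
            ENNReal.toReal_ofReal (by positivity)]
  have hlb' : (p y - ε1) * (r ^ d * V) ≤ F.toReal := by
    rcases le_or_gt (p y - ε1) 0 with h | h
    · have h3 : (p y - ε1) * (r ^ d * V) ≤ 0 :=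
        mul_nonpos_of_nonpos_of_nonneg h (by positivity)
      linarith [ENNReal.toReal_nonneg (a := F)]
    · calc (p y - ε1) * (r ^ d * V)
          = (ENNReal.ofReal (p y - ε1) * ENNReal.ofReal (r ^ d * V)).toReal := by
            rw [ENNReal.toReal_mul, ENNReal.toReal_ofReal h.le,
              ENNReal.toReal_ofReal (by positivity)]
        _ ≤ F.toReal := ENNReal.toReal_mono hFne hlb
  rw [Real.dist_eq, abs_sub_lt_iff]
  have h2 : ε1 * V = ε / 2 := by
    rw [hε1]
    field_simp
  constructor
  · have h1 : F.toReal / r ^ d ≤ (p y + ε1) * V := by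
      rw [div_le_iff₀ hrd]; nlinarith
    nlinarith
  · have h1 : (p y - ε1) * V ≤ F.toReal / r ^ d := by
      rw [le_div_iff₀ hrd]; nlinarith
    nlinarith

end AuxLemmas

set_option maxHeartbeats 1000000 in
open Filter Real Set Metric in
/-- **Local asymptotics of the expected nearest-neighbor squared distance.**
Let `Ω ⊂ ℝ^d` be compact convex with nonempty interior, `p` continuous and strictly
positive on `Ω`, vanishing outside, `Z_1, Z_2, …` i.i.d. with law `P = p · Leb`, and `y`
an interior point of `Ω`. Then
`lim_{n→∞} n^{2/d} E[min_{1≤j≤n} ‖y − Z_j‖²] = Γ(1 + 2/d) (p(y) V_d)^{−2/d}`. -/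
theorem stmt_10 (d : ℕ) (hd : 1 ≤ d)
    (Ω : Set (EuclideanSpace ℝ (Fin d)))
    (hcomp : IsCompact Ω) (hconv : Convex ℝ Ω) (hint : (interior Ω).Nonempty)
    (p : EuclideanSpace ℝ (Fin d) → ℝ)
    (hpcont : ContinuousOn p Ω) (hppos : ∀ x ∈ Ω, 0 < p x) (hpzero : ∀ x ∉ Ω, p x = 0)
    (P : Measure (EuclideanSpace ℝ (Fin d)))
    (hP : P = volume.withDensity fun x => ENNReal.ofReal (p x))
    [IsProbabilityMeasure P]
    {Θ : Type*} [MeasurableSpace Θ] (Pr : Measure Θ) [IsProbabilityMeasure Pr]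
    (Z : ℕ → Θ → EuclideanSpace ℝ (Fin d))
    (hZmeas : ∀ i, Measurable (Z i))
    (hZlaw : ∀ i, Measure.map (Z i) Pr = P)
    (hZindep : ProbabilityTheory.iIndepFun Z Pr)
    (y : EuclideanSpace ℝ (Fin d)) (hy : y ∈ interior Ω) :
    Filter.Tendsto
      (fun n : ℕ => (n : ℝ) ^ ((2 : ℝ) / d) *
        (∫⁻ θ, ENNReal.ofReal (⨅ j : Fin n, ‖y - Z j θ‖ ^ 2) ∂Pr).toReal)
      Filter.atTop
      (nhds (Real.Gamma (1 + 2 / (d : ℝ)) * (p y * ballVol d) ^ (-(2 : ℝ) / d))) := by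
  have hd' : (0:ℝ) < d := by exact_mod_cast hd
  have hΩmeas : MeasurableSet Ω := hcomp.isClosed.measurableSet
  have hyΩ : y ∈ Ω := interior_subset hy
  have hpy : 0 < p y := hppos y hyΩ
  have hVpos : 0 < ballVol d := ballVol_pos d
  set a : ℝ := p y * ballVol d with ha
  have hapos : 0 < a := mul_pos hpy hVpos
  have hpconty : ContinuousAt p y := hpcont.continuousAt (mem_interior_iff_mem_nhds.mp hy)
  -- measurability of the density
  have hpae : AEMeasurable p (volume : Measure (EuclideanSpace ℝ (Fin d))) := by
    have h1 : AEMeasurable p (volume.restrict Ω) := hpcont.aemeasurable hΩmeas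
    have h2 : Set.indicator Ω p = p := by
      funext x
      by_cases hx : x ∈ Ω
      · simp [Set.indicator_of_mem hx]
      · simp [Set.indicator_of_notMem hx, hpzero x hx]
    rw [← h2]
    exact (aemeasurable_indicator_iff hΩmeas).mpr h1
  have hqae : AEMeasurable (fun x => ENNReal.ofReal (p x))
      (volume : Measure (EuclideanSpace ℝ (Fin d))) :=
    ENNReal.measurable_ofReal.comp_aemeasurable hpae
  -- P vanishes outside Ω
  have hPcompl : P Ωᶜ = 0 := by
    rw [hP, withDensity_apply _ hΩmeas.compl]
    calc ∫⁻ x in Ωᶜ, ENNReal.ofReal (p x) = ∫⁻ _x in Ωᶜ, 0 := by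
          apply setLIntegral_congr_fun hΩmeas.compl
          intro x hx
          simp only [hpzero x hx, ENNReal.ofReal_zero]
      _ = 0 := by simp
  -- the diameter bound D
  obtain ⟨D0, hD0⟩ := hcomp.isBounded.subset_closedBall y
  set D : ℝ := max D0 1 with hD
  have hDpos : (0:ℝ) < D := lt_of_lt_of_le one_pos (le_max_right _ _)
  have hΩD : Ω ⊆ Metric.closedBall y D :=
    hD0.trans (Metric.closedBall_subset_closedBall (le_max_left _ _))
  -- the inner ball of radius r0 and the minimum ε0 of p on it
  obtain ⟨r1, hr1pos, hball1⟩ := Metric.isOpen_iff.mp isOpen_interior y hy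
  set r0 : ℝ := r1 / 2 with hr0
  have hr0pos : 0 < r0 := by positivity
  have hr0Ω : Metric.closedBall y r0 ⊆ Ω := by
    refine subset_trans ?_ (interior_subset)
    refine subset_trans ?_ hball1
    intro z hz
    have := Metric.mem_closedBall.mp hz
    rw [Metric.mem_ball]
    linarith
  obtain ⟨x0, hx0mem, hx0min⟩ :=
    (isCompact_closedBall y r0).exists_isMinOn
      (Metric.nonempty_closedBall.mpr hr0pos.le)
      (hpcont.mono hr0Ω)
  set ε0 : ℝ := p x0 with hε0
  have hε0pos : 0 < ε0 := hppos x0 (hr0Ω hx0mem)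
  have hε0le : ∀ x ∈ Metric.closedBall y r0, ε0 ≤ p x := fun x hx => hx0min hx
  -- the sets B t and the tail function G
  set B : ℝ → Set (EuclideanSpace ℝ (Fin d)) := fun t => {z | t < ‖y - z‖ ^ 2} with hB
  have hBcont : Continuous fun z : EuclideanSpace ℝ (Fin d) => ‖y - z‖ ^ 2 :=
    ((continuous_const.sub continuous_id).norm).pow 2
  have hBmeas : ∀ t, MeasurableSet (B t) := fun t =>
    measurableSet_lt measurable_const hBcont.measurable
  set G : ℝ → ENNReal := fun t => P (B t) with hG
  have hGanti : Antitone G := fun t t' h =>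
    measure_mono (fun z hz => lt_of_le_of_lt h hz)
  have hGmeas : Measurable G := hGanti.measurable
  -- the ball mass function φ
  set φ : ℝ → ℝ := fun r => (P (Metric.closedBall y r)).toReal with hφ
  have hφ01 : ∀ r, 0 ≤ φ r ∧ φ r ≤ 1 := by
    intro r
    refine ⟨ENNReal.toReal_nonneg, ?_⟩
    rw [hφ]
    calc (P (Metric.closedBall y r)).toReal ≤ (1 : ENNReal).toReal :=
          ENNReal.toReal_mono ENNReal.one_ne_top prob_le_one
      _ = 1 := by simp
  have hPball_ne : ∀ r, P (Metric.closedBall y r) ≠ ⊤ := fun r =>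
    ne_top_of_le_ne_top ENNReal.one_ne_top prob_le_one
  -- complement description of B t
  have hBcompl : ∀ t : ℝ, 0 ≤ t → B t = (Metric.closedBall y (Real.sqrt t))ᶜ := by
    intro t ht
    ext z
    simp only [hB, Set.mem_setOf_eq, Set.mem_compl_iff, Metric.mem_closedBall]
    rw [dist_comm, dist_eq_norm, Real.le_sqrt (norm_nonneg _) ht]
    exact lt_iff_not_ge
  -- G in terms of φ
  have hGφ : ∀ t : ℝ, 0 ≤ t → G t = ENNReal.ofReal (1 - φ (Real.sqrt t)) := by
    intro t ht
    rw [hG]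
    simp only
    rw [hBcompl t ht, prob_compl_eq_one_sub measurableSet_closedBall]
    rw [show P (Metric.closedBall y (Real.sqrt t))
        = ENNReal.ofReal (φ (Real.sqrt t)) from (ENNReal.ofReal_toReal (hPball_ne _)).symm]
    rw [← ENNReal.ofReal_one, ← ENNReal.ofReal_sub _ (hφ01 _).1]
  -- G vanishes beyond D ^ 2
  have hGzero : ∀ t : ℝ, D ^ 2 < t → G t = 0 := by
    intro t ht
    refine measure_mono_null (fun z hz => ?_) hPcompl
    intro hzΩ
    have h1 : ‖y - z‖ ≤ D := by
      have := Metric.mem_closedBall.mp (hΩD hzΩ)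
      rwa [dist_comm, dist_eq_norm] at this
    have h2 : ‖y - z‖ ^ 2 ≤ D ^ 2 := by nlinarith [norm_nonneg (y - z)]
    have h3 : t < ‖y - z‖ ^ 2 := hz
    linarith
  -- lower bound for φ
  have hφlb : ∀ r : ℝ, 0 < r → ε0 * ballVol d * min r r0 ^ d ≤ φ r := by
    intro r hr
    have hmin_pos : 0 < min r r0 := lt_min hr hr0pos
    have hsub : Metric.closedBall y (min r r0) ⊆ Metric.closedBall y r0 :=
      Metric.closedBall_subset_closedBall (min_le_right _ _)
    have hkey : ENNReal.ofReal ε0 * volume (Metric.closedBall y (min r r0))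
        ≤ P (Metric.closedBall y (min r r0)) := by
      rw [hP, withDensity_apply _ measurableSet_closedBall, ← setLIntegral_const]
      refine setLIntegral_mono_ae hqae.restrict (Filter.Eventually.of_forall (fun x hx => ?_))
      exact ENNReal.ofReal_le_ofReal (hε0le x (hsub hx))
    have hmono : P (Metric.closedBall y (min r r0)) ≤ P (Metric.closedBall y r) :=
      measure_mono (Metric.closedBall_subset_closedBall (min_le_left _ _))
    have := le_trans hkey hmono
    rw [aux_volume_closedBall hd y hmin_pos.le, ← ENNReal.ofReal_mul hε0pos.le] at this
    calc ε0 * ballVol d * min r r0 ^ d = ε0 * (min r r0 ^ d * ballVol d) := by ring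
      _ ≤ φ r := by
          rw [hφ]
          simp only
          rw [← ENNReal.toReal_ofReal (show (0:ℝ) ≤ ε0 * (min r r0 ^ d * ballVol d) by positivity)]
          exact ENNReal.toReal_mono (hPball_ne r) this
  -- Step 1: layer-cake + independence
  have hS1 : ∀ n : ℕ, 1 ≤ n →
      (∫⁻ θ, ENNReal.ofReal (⨅ j : Fin n, ‖y - Z j θ‖ ^ 2) ∂Pr)
        = ∫⁻ t in Set.Ioi (0:ℝ), (G t) ^ n := by
    intro n hn
    haveI : Nonempty (Fin n) := Fin.pos_iff_nonempty.mp hn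
    have hmj : ∀ j : Fin n, Measurable fun θ => ‖y - Z (j:ℕ) θ‖ ^ 2 :=
      fun j => hBcont.measurable.comp (hZmeas j)
    have hmeas : Measurable fun θ => ⨅ j : Fin n, ‖y - Z (j:ℕ) θ‖ ^ 2 :=
      Measurable.iInf hmj
    have hnn : ∀ θ, 0 ≤ ⨅ j : Fin n, ‖y - Z (j:ℕ) θ‖ ^ 2 := fun θ =>
      Real.iInf_nonneg (fun j => by positivity)
    rw [lintegral_eq_lintegral_meas_lt Pr (Filter.Eventually.of_forall hnn) hmeas.aemeasurable]
    refine setLIntegral_congr_fun measurableSet_Ioi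
      (fun t _ => ?_)
    have hset : {θ | t < ⨅ j : Fin n, ‖y - Z (j:ℕ) θ‖ ^ 2}
        = ⋂ i ∈ Finset.range n, (Z i) ⁻¹' (B t) := by
      ext θ
      simp only [Set.mem_setOf_eq, Set.mem_iInter, Set.mem_preimage, Finset.mem_range, hB]
      constructor
      · intro h i hi
        have hbdd : BddBelow (Set.range fun j : Fin n => ‖y - Z (j:ℕ) θ‖ ^ 2) :=
          (Set.finite_range _).bddBelow
        exact lt_of_lt_of_le h (ciInf_le hbdd ⟨i, hi⟩)
      · intro h
        have hmem : (⨅ j : Fin n, ‖y - Z (j:ℕ) θ‖ ^ 2)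
            ∈ Set.range fun j : Fin n => ‖y - Z (j:ℕ) θ‖ ^ 2 :=
          (Set.range_nonempty _).csInf_mem (Set.finite_range _)
        obtain ⟨j0, hj0⟩ := hmem
        rw [← hj0]
        exact h j0 j0.isLt
    rw [hset, hZindep.meas_biInter (fun i hi => ⟨B t, hBmeas t, rfl⟩)]
    have hfac : ∀ i ∈ Finset.range n, Pr ((Z i) ⁻¹' (B t)) = G t := by
      intro i _
      rw [hG]
      simp only
      rw [← hZlaw i, Measure.map_apply (hZmeas i) (hBmeas t)]
    rw [Finset.prod_congr rfl hfac, Finset.prod_const, Finset.card_range]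
  -- scaling factors
  set c : ℕ → ℝ := fun n => (n:ℝ) ^ (-((2:ℝ)/d)) with hc
  have hcpos : ∀ n : ℕ, 1 ≤ n → 0 < c n := fun n hn =>
    Real.rpow_pos_of_pos (by exact_mod_cast hn) _
  have hcnonneg : ∀ n : ℕ, 0 ≤ c n := fun n => Real.rpow_nonneg (Nat.cast_nonneg n) _
  -- Step 3: change of variables
  have hS3 : ∀ n : ℕ, 1 ≤ n →
      ENNReal.ofReal ((n:ℝ) ^ ((2:ℝ)/d)) * ∫⁻ t in Set.Ioi (0:ℝ), (G t) ^ n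
        = ∫⁻ s in Set.Ioi (0:ℝ), (G (c n * s)) ^ n := by
    intro n hn
    have hH : Measurable fun t => (G t) ^ n := hGmeas.pow_const n
    have hinv : (c n)⁻¹ = (n:ℝ) ^ ((2:ℝ)/d) := by
      rw [hc]
      simp only
      rw [Real.rpow_neg (Nat.cast_nonneg n), inv_inv]
    rw [aux_lintegral_Ioi_scale hH (hcpos n hn), hinv]
  -- power computation for radii
  have hrdg : ∀ n : ℕ, 1 ≤ n → ∀ s : ℝ, 0 < s →
      (Real.sqrt (c n * s)) ^ d = (n:ℝ)⁻¹ * s ^ ((d:ℝ)/2) := by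
    intro n hn s hs
    have h1 : (Real.sqrt (c n * s)) ^ d = (c n * s) ^ ((d:ℝ)/2) := by
      rw [Real.sqrt_eq_rpow, ← Real.rpow_natCast ((c n * s) ^ ((1:ℝ)/2)) d,
        ← Real.rpow_mul (by positivity)]
      congr 1
      field_simp
    have h2 : (c n * s) ^ ((d:ℝ)/2) = (n:ℝ)⁻¹ * s ^ ((d:ℝ)/2) := by
      rw [Real.mul_rpow (hcnonneg n) hs.le, hc]
      simp only
      have h3 : (-((2:ℝ)/d)) * ((d:ℝ)/2) = -1 := by
        have hdne : (d:ℝ) ≠ 0 := ne_of_gt hd'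
        field_simp
      rw [← Real.rpow_mul (Nat.cast_nonneg n), h3, Real.rpow_neg_one]
    rw [h1, h2]
  -- Step 4: pointwise limit
  have hS4 : ∀ s : ℝ, 0 < s →
      Filter.Tendsto (fun n : ℕ => (G (c n * s)) ^ n) Filter.atTop
        (nhds (ENNReal.ofReal (Real.exp (-(a * s ^ ((d:ℝ)/2)))))) := by
    intro s hs
    set r : ℕ → ℝ := fun n => Real.sqrt (c n * s) with hr
    have hrpos : ∀ n : ℕ, 1 ≤ n → 0 < r n := fun n hn =>
      Real.sqrt_pos.mpr (mul_pos (hcpos n hn) hs)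
    have hc0 : Filter.Tendsto c Filter.atTop (nhds 0) := by
      rw [hc]
      exact (tendsto_rpow_neg_atTop (by positivity)).comp
        tendsto_natCast_atTop_atTop
    have hrt : Filter.Tendsto r Filter.atTop (nhdsWithin 0 (Set.Ioi 0)) := by
      rw [tendsto_nhdsWithin_iff]
      constructor
      · have h1 : Filter.Tendsto (fun n => c n * s) Filter.atTop (nhds 0) := by
          simpa using hc0.mul_const s
        have h2 := (Real.continuous_sqrt.tendsto 0).comp h1
        rw [Real.sqrt_zero] at h2; exact h2
      · filter_upwards [Filter.eventually_ge_atTop 1] with n hn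
        exact hrpos n hn
    have hrd : ∀ n : ℕ, 1 ≤ n → (r n) ^ d = (n:ℝ)⁻¹ * s ^ ((d:ℝ)/2) :=
      fun n hn => hrdg n hn s hs
    have hkey : ∀ n : ℕ, 1 ≤ n → (n:ℝ) * φ (r n)
        = (φ (r n) / (r n) ^ d) * s ^ ((d:ℝ)/2) := by
      intro n hn
      have hnne : (n:ℝ) ≠ 0 := Nat.cast_ne_zero.mpr (by omega)
      have hsne : s ^ ((d:ℝ)/2) ≠ 0 := by positivity
      rw [hrd n hn]
      field_simp
    have hψ : Filter.Tendsto (fun r' : ℝ => φ r' / r' ^ d)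
        (nhdsWithin 0 (Set.Ioi 0)) (nhds a) := by
      have hφeq : φ = fun r' =>
          ((volume.withDensity fun x => ENNReal.ofReal (p x))
            (Metric.closedBall y r')).toReal := by
        rw [hφ, hP]
      rw [hφeq, ha]
      exact aux_small_ball hd hpconty hpy.le hqae
    have hnφ : Filter.Tendsto (fun n : ℕ => (n:ℝ) * φ (r n)) Filter.atTop
        (nhds (a * s ^ ((d:ℝ)/2))) := by
      have h1 := (hψ.comp hrt).mul_const (s ^ ((d:ℝ)/2))
      refine h1.congr' ?_
      filter_upwards [Filter.eventually_ge_atTop 1] with n hn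
      exact (hkey n hn).symm
    have hGeq : (fun n : ℕ => ENNReal.ofReal ((1 - φ (r n)) ^ n))
        =ᶠ[Filter.atTop] (fun n : ℕ => (G (c n * s)) ^ n) := by
      filter_upwards [Filter.eventually_ge_atTop 1] with n hn
      rw [hGφ (c n * s) (mul_nonneg (hcnonneg n) hs.le)]
      rw [← ENNReal.ofReal_pow (by linarith [(hφ01 (r n)).2])]
    exact (ENNReal.tendsto_ofReal
      (aux_pow_tendsto_exp (fun n => (hφ01 (r n)).1)
        (fun n => (hφ01 (r n)).2) hnφ)).congr' hGeq
  -- Step 5: domination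
  set cc : ℝ := ε0 * ballVol d with hcc
  have hccpos : 0 < cc := mul_pos hε0pos hVpos
  set c₂ : ℝ := min cc (cc * r0 ^ d / D ^ d) with hc₂
  have hc₂pos : 0 < c₂ := lt_min hccpos (by positivity)
  have hDom : ∀ n : ℕ, 1 ≤ n → ∀ s : ℝ, 0 < s →
      (G (c n * s)) ^ n ≤ ENNReal.ofReal (Real.exp (-c₂ * s ^ ((d:ℝ)/2))) := by
    intro n hn s hs
    have hn0 : n ≠ 0 := by omega
    have ht : 0 < c n * s := mul_pos (hcpos n hn) hs
    by_cases hcase : D ^ 2 < c n * s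
    · rw [hGzero _ hcase, zero_pow hn0]
      exact zero_le
    · push_neg at hcase
      set rr : ℝ := Real.sqrt (c n * s) with hrr
      have hrrpos : 0 < rr := Real.sqrt_pos.mpr ht
      have hnrr : (n:ℝ) * rr ^ d = s ^ ((d:ℝ)/2) := by
        rw [hrr, hrdg n hn s hs]
        have hnne : (n:ℝ) ≠ 0 := Nat.cast_ne_zero.mpr hn0
        field_simp
      -- lower bound on n * φ rr
      have hφrr := hφlb rr hrrpos
      have hnφ2 : c₂ * s ^ ((d:ℝ)/2) ≤ (n:ℝ) * φ rr := by
        rcases le_total rr r0 with hle | hle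
        · have hminrr : min rr r0 = rr := min_eq_left hle
          rw [hminrr] at hφrr
          calc c₂ * s ^ ((d:ℝ)/2) ≤ cc * s ^ ((d:ℝ)/2) := by
                apply mul_le_mul_of_nonneg_right (min_le_left _ _) (by positivity)
            _ = cc * ((n:ℝ) * rr ^ d) := by rw [hnrr]
            _ ≤ (n:ℝ) * φ rr := by
                have := mul_le_mul_of_nonneg_left hφrr (Nat.cast_nonneg n : (0:ℝ) ≤ n)
                calc cc * ((n:ℝ) * rr ^ d) = (n:ℝ) * (ε0 * ballVol d * rr ^ d) := by
                      rw [hcc]; ring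
                  _ ≤ (n:ℝ) * φ rr := this
        · have hminrr : min rr r0 = r0 := min_eq_right hle
          rw [hminrr] at hφrr
          have hsle : s ≤ D ^ 2 * (n:ℝ) ^ ((2:ℝ)/d) := by
            have h4 : (c n)⁻¹ = (n:ℝ) ^ ((2:ℝ)/d) := by
              rw [hc]
              simp only
              rw [Real.rpow_neg (Nat.cast_nonneg n), inv_inv]
            rw [← h4]
            rw [← mul_le_mul_iff_right₀ (hcpos n hn)]
            calc c n * s ≤ D ^ 2 := hcase
              _ = c n * (D ^ 2 * (c n)⁻¹) := by
                  field_simp [(hcpos n hn).ne']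
          have hsd : s ^ ((d:ℝ)/2) ≤ D ^ d * (n:ℝ) := by
            calc s ^ ((d:ℝ)/2) ≤ (D ^ 2 * (n:ℝ) ^ ((2:ℝ)/d)) ^ ((d:ℝ)/2) :=
                  Real.rpow_le_rpow hs.le hsle (by positivity)
              _ = D ^ d * (n:ℝ) := by
                  rw [Real.mul_rpow (by positivity) (by positivity)]
                  congr 1
                  · rw [← Real.rpow_natCast D 2, ← Real.rpow_mul hDpos.le,
                      ← Real.rpow_natCast D d]
                    congr 1
                    field_simp; norm_num
                  · rw [← Real.rpow_mul (Nat.cast_nonneg n)]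
                    have h5 : (2:ℝ)/d * ((d:ℝ)/2) = 1 := by
                      have hdne : (d:ℝ) ≠ 0 := ne_of_gt hd'
                      field_simp
                    rw [h5, Real.rpow_one]
          calc c₂ * s ^ ((d:ℝ)/2) ≤ cc * r0 ^ d / D ^ d * s ^ ((d:ℝ)/2) := by
                apply mul_le_mul_of_nonneg_right (min_le_right _ _) (by positivity)
            _ ≤ cc * r0 ^ d / D ^ d * (D ^ d * (n:ℝ)) := by
                apply mul_le_mul_of_nonneg_left hsd (by positivity)
            _ = (n:ℝ) * (ε0 * ballVol d * r0 ^ d) := by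
                rw [hcc]
                field_simp
            _ ≤ (n:ℝ) * φ rr := by
                apply mul_le_mul_of_nonneg_left hφrr (Nat.cast_nonneg n)
      -- assemble
      rw [hGφ (c n * s) ht.le, ← hrr,
        ← ENNReal.ofReal_pow (by linarith [(hφ01 rr).2])]
      apply ENNReal.ofReal_le_ofReal
      calc (1 - φ rr) ^ n ≤ Real.exp (-(φ rr)) ^ n := by
            apply pow_le_pow_left₀ (by linarith [(hφ01 rr).2])
            linarith [Real.add_one_le_exp (-(φ rr))]
        _ = Real.exp (-((n:ℝ) * φ rr)) := by rw [← Real.exp_nat_mul]; ring_nf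
        _ ≤ Real.exp (-c₂ * s ^ ((d:ℝ)/2)) := by
            rw [Real.exp_le_exp]
            nlinarith
  -- integrability of exponential bounds
  have hexp : ∀ b : ℝ, 0 < b →
      ∫⁻ s in Set.Ioi (0:ℝ), ENNReal.ofReal (Real.exp (-b * s ^ ((d:ℝ)/2)))
        = ENNReal.ofReal (b ^ (-1/((d:ℝ)/2)) * Real.Gamma (1/((d:ℝ)/2) + 1)) := by
    intro b hb
    have hint' : ∫ s in Set.Ioi (0:ℝ), Real.exp (-b * s ^ ((d:ℝ)/2))
        = b ^ (-1/((d:ℝ)/2)) * Real.Gamma (1/((d:ℝ)/2) + 1) :=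
      integral_exp_neg_mul_rpow (by positivity) hb
    have hIntOn : IntegrableOn (fun s : ℝ => Real.exp (-b * s ^ ((d:ℝ)/2)))
        (Set.Ioi 0) := by
      by_contra hni
      rw [MeasureTheory.integral_undef hni] at hint'
      have hpos : 0 < b ^ (-1/((d:ℝ)/2)) * Real.Gamma (1/((d:ℝ)/2) + 1) :=
        mul_pos (Real.rpow_pos_of_pos hb _) (Real.Gamma_pos_of_pos (by positivity))
      linarith
    rw [← MeasureTheory.ofReal_integral_eq_lintegral_ofReal hIntOn
      (Filter.Eventually.of_forall (fun s => (Real.exp_pos _).le)), hint']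
  -- Step 6: dominated convergence
  have hDCT : Filter.Tendsto
      (fun n : ℕ => ∫⁻ s in Set.Ioi (0:ℝ), (G (c n * s)) ^ n)
      Filter.atTop
      (nhds (∫⁻ s in Set.Ioi (0:ℝ), ENNReal.ofReal (Real.exp (-a * s ^ ((d:ℝ)/2))))) := by
    refine tendsto_lintegral_filter_of_dominated_convergence
      (fun s => ENNReal.ofReal (Real.exp (-c₂ * s ^ ((d:ℝ)/2)))) ?_ ?_ ?_ ?_
    · exact Filter.Eventually.of_forall
        (fun n => (hGmeas.comp (measurable_const_mul (c n))).pow_const n)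
    · filter_upwards [Filter.eventually_ge_atTop 1] with n hn
      rw [ae_restrict_iff' measurableSet_Ioi]
      exact Filter.Eventually.of_forall (fun s hs => hDom n hn s hs)
    · rw [hexp c₂ hc₂pos]
      exact ENNReal.ofReal_ne_top
    · rw [ae_restrict_iff' measurableSet_Ioi]
      refine Filter.Eventually.of_forall (fun s hs => ?_)
      have h6 := hS4 s hs
      simpa [neg_mul] using h6
  -- the limit value
  set Lval : ℝ := a ^ (-1/((d:ℝ)/2)) * Real.Gamma (1/((d:ℝ)/2) + 1) with hLval
  have hLvalnn : 0 ≤ Lval :=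
    le_of_lt (mul_pos (Real.rpow_pos_of_pos hapos _)
      (Real.Gamma_pos_of_pos (by positivity)))
  have hfinal : Filter.Tendsto
      (fun n : ℕ => (∫⁻ s in Set.Ioi (0:ℝ), (G (c n * s)) ^ n).toReal)
      Filter.atTop (nhds Lval) := by
    rw [show (∫⁻ s in Set.Ioi (0:ℝ), ENNReal.ofReal (Real.exp (-a * s ^ ((d:ℝ)/2))))
        = ENNReal.ofReal Lval from hexp a hapos] at hDCT
    have h7 := (ENNReal.tendsto_toReal ENNReal.ofReal_ne_top).comp hDCT
    simpa [ENNReal.toReal_ofReal hLvalnn, Function.comp_def] using h7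
  -- final assembly
  have hueq : (fun n : ℕ => (∫⁻ s in Set.Ioi (0:ℝ), (G (c n * s)) ^ n).toReal)
      =ᶠ[Filter.atTop] (fun n : ℕ => (n : ℝ) ^ ((2:ℝ)/d) *
        (∫⁻ θ, ENNReal.ofReal (⨅ j : Fin n, ‖y - Z j θ‖ ^ 2) ∂Pr).toReal) := by
    filter_upwards [Filter.eventually_ge_atTop 1] with n hn
    rw [hS1 n hn, ← hS3 n hn, ENNReal.toReal_mul,
      ENNReal.toReal_ofReal (Real.rpow_nonneg (Nat.cast_nonneg n) _)]
  have hLrw : Real.Gamma (1 + 2/(d:ℝ)) * a ^ (-(2:ℝ)/d) = Lval := by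
    rw [hLval]
    have hdne : (d:ℝ) ≠ 0 := ne_of_gt hd'
    have he1 : -1/((d:ℝ)/2) = -(2:ℝ)/d := by
      field_simp
    have he2 : 1/((d:ℝ)/2) = 2/(d:ℝ) := by
      field_simp
    rw [he1, he2, mul_comm, add_comm]
  rw [← hLrw] at hfinal
  exact hfinal.congr' hueq
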